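/- Let Q be a finite set and let G be a directed graph with vertex set Q and edges labelled by integers (edges are triples (q,w,q') with w ∈ ℤ), with no negative cycles, which is maximal in the following sense: for all q, q' ∈ Q, if (q,0,q') is not an edge of G, then the graph obtained from G by adding the edge (q,0,q') contains a negative cycle. Then the binary relation on Q defined by q ≤ q' iff (q,0,q') is an edge of G is reflexive, transitive, and total (for all q, q', either q ≤ q' or q' ≤ q). -/

import Mathlib

open Filter


/-- A finite path: a list of consecutive edges, all belonging to `E`,
starting at `u` (when nonempty). -/
def FinPath {V : Type} (E : Set (V × ℤ × V)) (u : V) (p : List (V × ℤ × V)) : Prop :=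
  (∀ e ∈ p, e ∈ E) ∧ List.Chain' (fun e e' => e.2.2 = e'.1) p ∧
    ∀ h : p ≠ [], (p.head h).1 = u

/-- The last vertex of a finite path starting at `u` (which is `u` itself for the empty path). -/
def lastV {V : Type} (u : V) (p : List (V × ℤ × V)) : V :=
  (p.getLastD (u, 0, u)).2.2

/-- An infinite path: a sequence of consecutive edges, all belonging to `E`. -/
def InfPath {V : Type} (E : Set (V × ℤ × V)) (π : ℕ → V × ℤ × V) : Prop :=
  (∀ i, π i ∈ E) ∧ ∀ i, (π i).2.2 = (π (i + 1)).1

/-- The total weight of a finite path. -/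
def pathWeight {V : Type} (p : List (V × ℤ × V)) : ℤ :=
  (p.map fun e => e.2.1).sum

/-- A sequence of integer weights satisfies mean payoff if the liminf of the
averages of its prefixes is nonnegative. -/
def MeanPayoffSeq (w : ℕ → ℤ) : Prop :=
  0 ≤ Filter.atTop.liminf (fun ℓ : ℕ => (∑ i ∈ Finset.range ℓ, (w i : ℝ)) / (ℓ : ℝ))

/-- A graph (given by its edge set) satisfies mean payoff if all its infinite paths do. -/
def SatMP {V : Type} (E : Set (V × ℤ × V)) : Prop :=
  ∀ π : ℕ → V × ℤ × V, InfPath E π → MeanPayoffSeq (fun i => (π i).2.1)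

/-- A cycle: a nonempty finite path whose first and last vertices coincide. -/
def IsCycle {V : Type} (E : Set (V × ℤ × V)) (p : List (V × ℤ × V)) : Prop :=
  p ≠ [] ∧ ∃ v, FinPath E v p ∧ lastV v p = v

/-- A `W`-graph: a finite set of vertices, edges labelled by weights in `W`,
and an initial vertex from which every vertex is reachable. -/
structure WGraph (W : Finset ℤ) where
  V : Type
  fin : Fintype V
  E : Set (V × ℤ × V)
  init : V
  wt : ∀ e ∈ E, e.2.1 ∈ W
  reach : ∀ v : V, ∃ p, FinPath E init p ∧ lastV init p = v

attribute [instance] WGraph.fin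

lemma pathWeight_nil' {V : Type} : pathWeight ([] : List (V × ℤ × V)) = 0 := rfl

lemma pathWeight_cons' {V : Type} (x : V × ℤ × V) (p : List (V × ℤ × V)) :
    pathWeight (x :: p) = x.2.1 + pathWeight p := by simp [pathWeight]

lemma pathWeight_append' {V : Type} (X Y : List (V × ℤ × V)) :
    pathWeight (X ++ Y) = pathWeight X + pathWeight Y := by simp [pathWeight]

lemma lastV_nil' {V : Type} (u : V) : lastV u ([] : List (V × ℤ × V)) = u := rfl

lemma lastV_cons' {V : Type} (u : V) (x : V × ℤ × V) (p : List (V × ℤ × V)) :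
    lastV u (x :: p) = lastV x.2.2 p := by
  cases p <;> simp only [lastV, List.getLastD_cons, List.getLastD_nil]

lemma lastV_append' {V : Type} (u : V) (X Y : List (V × ℤ × V)) :
    lastV u (X ++ Y) = lastV (lastV u X) Y := by
  induction X generalizing u with
  | nil => simp [lastV_nil']
  | cons x X ih => simp [List.cons_append, lastV_cons', ih]

lemma finPath_nil' {V : Type} (E : Set (V × ℤ × V)) (u : V) : FinPath E u [] :=
  ⟨by simp, List.isChain_nil, fun h => absurd rfl h⟩

lemma finPath_cons_iff {V : Type} (E : Set (V × ℤ × V)) (u : V) (x : V × ℤ × V)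
    (p : List (V × ℤ × V)) :
    FinPath E u (x :: p) ↔ x ∈ E ∧ x.1 = u ∧ FinPath E x.2.2 p := by
  constructor
  · rintro ⟨hmem, hch, hhd⟩
    rw [List.Chain', List.isChain_cons] at hch
    refine ⟨hmem x (by simp), hhd (by simp), fun e he => hmem e (by simp [he]), hch.2, ?_⟩
    intro hne
    have := hch.1 (p.head hne) (by simp [List.head?_eq_head hne])
    exact this.symm
  · rintro ⟨hx, hx1, hmem, hch, hhd⟩
    refine ⟨?_, ?_, ?_⟩
    · intro e he
      rcases List.mem_cons.mp he with rfl | he'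
      · exact hx
      · exact hmem e he'
    · rw [List.Chain', List.isChain_cons]
      refine ⟨?_, hch⟩
      intro b hb
      rcases p with _ | ⟨y, p'⟩
      · simp at hb
      · simp at hb
        subst hb
        exact (hhd (by simp)).symm
    · intro _; simpa using hx1

lemma finPath_append' {V : Type} {E : Set (V × ℤ × V)} {u : V} {X Y : List (V × ℤ × V)}
    (h1 : FinPath E u X) (h2 : FinPath E (lastV u X) Y) : FinPath E u (X ++ Y) := by
  induction X generalizing u with
  | nil => simpa [lastV_nil'] using h2
  | cons x X ih =>
    rw [finPath_cons_iff] at h1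
    rw [lastV_cons'] at h2
    rw [List.cons_append, finPath_cons_iff]
    exact ⟨h1.1, h1.2.1, ih h1.2.2 h2⟩

/-- Key decomposition lemma: a path in `E ∪ {(a,0,b)}` either gives an `E`-path
no heavier, or decomposes into an `E`-path to `a` and an `E`-path from `b`, or
there is a negative `E`-path from `b` to `a`. -/
lemma key_decomp {Q : Type} (E : Set (Q × ℤ × Q)) (a b : Q) :
    ∀ (p : List (Q × ℤ × Q)) (u : Q), FinPath (E ∪ {(a, (0:ℤ), b)}) u p →
    (∃ p', FinPath E u p' ∧ lastV u p' = lastV u p ∧ pathWeight p' ≤ pathWeight p) ∨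
    (∃ X Y, FinPath E u X ∧ lastV u X = a ∧ FinPath E b Y ∧ lastV b Y = lastV u p ∧
      pathWeight X + pathWeight Y ≤ pathWeight p) ∨
    (∃ Z, FinPath E b Z ∧ lastV b Z = a ∧ pathWeight Z < 0) := by
  intro p
  induction p with
  | nil => exact fun u _ => Or.inl ⟨[], finPath_nil' E u, rfl, le_refl _⟩
  | cons x p ih =>
    intro u hp
    rw [finPath_cons_iff] at hp
    obtain ⟨hx, hx1, hp⟩ := hp
    rcases hx with hxE | hxe
    · rcases ih x.2.2 hp with ⟨p', h1, h2, h3⟩ | ⟨X, Y, h1, h2, h3, h4, h5⟩ | hr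
      · refine Or.inl ⟨x :: p', ?_, ?_, ?_⟩
        · rw [finPath_cons_iff]; exact ⟨hxE, hx1, h1⟩
        · rw [lastV_cons', lastV_cons', h2]
        · rw [pathWeight_cons', pathWeight_cons']; omega
      · refine Or.inr (Or.inl ⟨x :: X, Y, ?_, ?_, h3, ?_, ?_⟩)
        · rw [finPath_cons_iff]; exact ⟨hxE, hx1, h1⟩
        · rw [lastV_cons', h2]
        · rw [lastV_cons']; exact h4
        · rw [pathWeight_cons', pathWeight_cons']; omega
      · exact Or.inr (Or.inr hr)
    · have hx' : x = (a, (0:ℤ), b) := hxe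
      subst hx'
      have hua : u = a := hx1.symm
      rcases ih b hp with ⟨p', h1, h2, h3⟩ | ⟨A, B, h1, h2, h3, h4, h5⟩ | hr
      · refine Or.inr (Or.inl ⟨[], p', finPath_nil' E u, (lastV_nil' u).trans hua, h1, ?_, ?_⟩)
        · rw [lastV_cons']; exact h2
        · rw [pathWeight_cons', pathWeight_nil']; simpa using h3
      · rcases lt_or_ge (pathWeight A) 0 with hA | hA
        · exact Or.inr (Or.inr ⟨A, h1, h2, hA⟩)
        · refine Or.inr (Or.inl ⟨[], B, finPath_nil' E u, (lastV_nil' u).trans hua, h3, ?_, ?_⟩)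
          · rw [lastV_cons']; exact h4
          · rw [pathWeight_cons', pathWeight_nil']; simp; omega
      · exact Or.inr (Or.inr hr)

/-- From a negative cycle in `E ∪ {(a,0,b)}` and no negative cycle in `E`,
extract a negative `E`-path from `b` to `a`. -/
lemma key_extract {Q : Type} (E : Set (Q × ℤ × Q)) (a b : Q)
    (hNoNeg : ¬ ∃ p, IsCycle E p ∧ pathWeight p < 0)
    (hC : ∃ p, IsCycle (E ∪ {(a, (0:ℤ), b)}) p ∧ pathWeight p < 0) :
    ∃ Z, FinPath E b Z ∧ lastV b Z = a ∧ pathWeight Z < 0 := by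
  obtain ⟨C, ⟨hCne, v, hCpath, hClast⟩, hCw⟩ := hC
  rcases key_decomp E a b C v hCpath with ⟨p', h1, h2, h3⟩ | ⟨X, Y, h1, h2, h3, h4, h5⟩ | hr
  · exfalso
    apply hNoNeg
    refine ⟨p', ⟨?_, v, h1, h2.trans hClast⟩, lt_of_le_of_lt h3 hCw⟩
    rintro rfl
    rw [pathWeight_nil'] at h3
    omega
  · refine ⟨Y ++ X, finPath_append' h3 ?_, ?_, ?_⟩
    · rw [h4, hClast]; exact h1
    · rw [lastV_append', h4, hClast]; exact h2
    · rw [pathWeight_append']; omega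
  · exact hr

/-- let `E` be a `ℤ`-labelled directed graph on a finite vertex set
`Q`, with no negative cycles, which is maximal in the sense that adding any missing
`0`-labelled edge creates a negative cycle. Then the relation `q ≤ q'` iff
`(q, 0, q') ∈ E` is reflexive, transitive and total. -/
theorem maximal_graph_total_preorder {Q : Type} [Fintype Q] (E : Set (Q × ℤ × Q))
    (hNoNeg : ¬ ∃ p, IsCycle E p ∧ pathWeight p < 0)
    (hMax : ∀ q q' : Q, (q, (0 : ℤ), q') ∉ E →
      ∃ p, IsCycle (E ∪ {(q, (0 : ℤ), q')}) p ∧ pathWeight p < 0) :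
    (∀ q : Q, (q, (0 : ℤ), q) ∈ E) ∧
    (∀ q q' q'' : Q, (q, (0 : ℤ), q') ∈ E → (q', (0 : ℤ), q'') ∈ E →
      (q, (0 : ℤ), q'') ∈ E) ∧
    (∀ q q' : Q, (q, (0 : ℤ), q') ∈ E ∨ (q', (0 : ℤ), q) ∈ E) := by
  refine ⟨?_, ?_, ?_⟩
  · -- reflexivity
    intro q
    by_contra h
    obtain ⟨Z, h1, h2, h3⟩ := key_extract E q q hNoNeg (hMax q q h)
    apply hNoNeg
    refine ⟨Z, ⟨?_, q, h1, h2⟩, h3⟩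
    rintro rfl
    rw [pathWeight_nil'] at h3
    omega
  · -- transitivity
    intro q q' q'' hqq' hq'q''
    by_contra h
    obtain ⟨Z, h1, h2, h3⟩ := key_extract E q q'' hNoNeg (hMax q q'' h)
    apply hNoNeg
    have hr : FinPath E q [(q, (0:ℤ), q'), (q', (0:ℤ), q'')] := by
      rw [finPath_cons_iff]
      refine ⟨hqq', rfl, ?_⟩
      rw [finPath_cons_iff]
      exact ⟨hq'q'', rfl, finPath_nil' E q''⟩
    have hrlast : lastV q [(q, (0:ℤ), q'), (q', (0:ℤ), q'')] = q'' := rfl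
    refine ⟨[(q, (0:ℤ), q'), (q', (0:ℤ), q'')] ++ Z, ⟨by simp, q, finPath_append' hr ?_, ?_⟩, ?_⟩
    · rw [hrlast]; exact h1
    · rw [lastV_append', hrlast]; exact h2
    · rw [pathWeight_append']
      have : pathWeight [(q, (0:ℤ), q'), (q', (0:ℤ), q'')] = 0 := rfl
      omega
  · -- totality
    intro q q'
    by_contra h
    push_neg at h
    obtain ⟨h1, h2⟩ := h
    obtain ⟨Z1, hZ1, hZ1l, hZ1w⟩ := key_extract E q q' hNoNeg (hMax q q' h1)
    obtain ⟨Z2, hZ2, hZ2l, hZ2w⟩ := key_extract E q' q hNoNeg (hMax q' q h2)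
    apply hNoNeg
    refine ⟨Z1 ++ Z2, ⟨?_, q', finPath_append' hZ1 ?_, ?_⟩, ?_⟩
    · rintro habs
      have : Z1 = [] := by
        cases Z1 with
        | nil => rfl
        | cons x t => simp at habs
      subst this
      rw [pathWeight_nil'] at hZ1w
      omega
    · rw [hZ1l]; exact hZ2
    · rw [lastV_append', hZ1l]; exact hZ2l
    · rw [pathWeight_append']; omega
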